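/- For any n ∈ ℕ, any q > 0 and any indices i, s, t ∈ {1,…,n}, setting d = |s−t|, one has min(q^d, q^{−d}) ≤ μ_{n,q}(π(i)=s) / μ_{n,q}(π(i)=t) ≤ max(q^d, q^{−d}). -/

import Mathlib

open Filter Finset MeasureTheory

/-- Number of inversions of a permutation of `Fin n`. -/
def inversions (n : ℕ) (π : Equiv.Perm (Fin n)) : ℕ :=
  (Finset.univ.filter (fun p : Fin n × Fin n => p.1 < p.2 ∧ π p.2 < π p.1)).card

/-- The `(n,q)`-Mallows probability mass function on `S_n`. -/
noncomputable def mallowsPMF (n : ℕ) (q : ℝ) (π : Equiv.Perm (Fin n)) : ℝ :=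
  q ^ inversions n π / ∑ σ : Equiv.Perm (Fin n), q ^ inversions n σ

open Classical in
/-- The `(n,q)`-Mallows probability of an event `P` of permutations. -/
noncomputable def mallowsProb (n : ℕ) (q : ℝ) (P : Equiv.Perm (Fin n) → Prop) : ℝ :=
  ∑ π : Equiv.Perm (Fin n), if P π then mallowsPMF n q π else 0

/-- Expectation with respect to the `(n,q)`-Mallows measure. -/
noncomputable def mallowsExp (n : ℕ) (q : ℝ) (f : Equiv.Perm (Fin n) → ℝ) : ℝ :=
  ∑ π : Equiv.Perm (Fin n), mallowsPMF n q π * f π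

/-- Action of a permutation of `Fin n` on one-based indices `{1,…,n}`. -/
def permAct (n : ℕ) (π : Equiv.Perm (Fin n)) (i : ℕ) : ℕ :=
  if h : 1 ≤ i ∧ i ≤ n then ((π ⟨i - 1, by omega⟩ : Fin n) : ℕ) + 1 else i

/-- The limiting density `u(x,y,β)` from Starr's theorem. -/
noncomputable def mallowsU (x y β : ℝ) : ℝ :=
  if β = 0 then 1
  else (β / 2) * Real.sinh (β / 2) /
    (Real.exp (β / 4) * Real.cosh (β * (x - y) / 2)
      - Real.exp (-β / 4) * Real.cosh (β * (x + y - 1) / 2)) ^ 2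

lemma swap_lt_iff {n : ℕ} (a b : Fin n) (hab : (a:ℕ)+1 = (b:ℕ)) {u v : Fin n} (huv : u ≠ v) :
    (Equiv.swap a b v < Equiv.swap a b u ↔
      if (u = a ∧ v = b) ∨ (u = b ∧ v = a) then ¬ v < u else v < u) := by
  have huv' : (u:ℕ) ≠ (v:ℕ) := fun h => huv (Fin.ext h)
  simp only [Equiv.swap_apply_def]
  split_ifs <;>
    simp only [Fin.lt_def, Fin.ext_iff, not_lt, not_and, not_or] at * <;> omega

lemma inv_swap_of_lt {n : ℕ} (a b : Fin n) (hab : (a:ℕ)+1 = (b:ℕ)) (π : Equiv.Perm (Fin n))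
    (h : π⁻¹ a < π⁻¹ b) :
    inversions n (Equiv.swap a b * π) = inversions n π + 1 := by
  have hab' : a ≠ b := by intro h'; rw [h'] at hab; omega
  set p1 := π⁻¹ a with hp1
  set p2 := π⁻¹ b with hp2
  have hπ1 : π p1 = a := π.apply_symm_apply a
  have hπ2 : π p2 = b := π.apply_symm_apply b
  have key : Finset.univ.filter
      (fun p : Fin n × Fin n => p.1 < p.2 ∧ (Equiv.swap a b * π) p.2 < (Equiv.swap a b * π) p.1)
      = insert (p1, p2) (Finset.univ.filter
        (fun p : Fin n × Fin n => p.1 < p.2 ∧ π p.2 < π p.1)) := by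
    ext ⟨x, y⟩
    rw [mem_filter, mem_insert, mem_filter]
    simp only [mem_filter, mem_insert, mem_univ, true_and, Equiv.Perm.mul_apply, Prod.mk.injEq]
    by_cases hxy : x < y
    · have hne : π x ≠ π y := fun hh => (ne_of_lt hxy) (π.injective hh)
      rw [swap_lt_iff a b hab hne]
      by_cases hcase : (π x = a ∧ π y = b) ∨ (π x = b ∧ π y = a)
      · rcases hcase with ⟨h1, h2⟩ | ⟨h1, h2⟩
        · have hx : x = p1 := π.injective (by rw [hπ1, h1])
          have hy : y = p2 := π.injective (by rw [hπ2, h2])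
          subst hx; subst hy
          rw [if_pos (Or.inl ⟨h1, h2⟩), hπ1, hπ2]
          constructor
          · intro _; exact Or.inl ⟨rfl, rfl⟩
          · intro _
            refine ⟨h, ?_⟩
            simp only [Fin.lt_def, not_lt]
            omega
        · have hx : x = p2 := π.injective (by rw [hπ2, h1])
          have hy : y = p1 := π.injective (by rw [hπ1, h2])
          exact absurd (hx ▸ hy ▸ hxy) (not_lt.mpr h.le)
      · rw [if_neg hcase]
        have hne2 : ¬ (x = p1 ∧ y = p2) := by
          rintro ⟨rfl, rfl⟩; exact hcase (Or.inl ⟨hπ1, hπ2⟩)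
        simp only [hxy, true_and]
        tauto
    · simp only [hxy, false_and, false_iff, not_or, not_and]
      constructor
      · intro h1 h2; rw [h1, h2] at hxy; exact hxy h
      · tauto
  have hnot : (p1, p2) ∉ Finset.univ.filter
      (fun p : Fin n × Fin n => p.1 < p.2 ∧ π p.2 < π p.1) := by
    simp only [mem_filter, mem_univ, true_and, not_and, hπ1, hπ2]
    intro _
    simp only [Fin.lt_def, not_lt]
    omega
  rw [inversions, key, Finset.card_insert_of_notMem hnot]
  rfl

lemma inv_swap {n : ℕ} (a b : Fin n) (hab : (a:ℕ)+1 = (b:ℕ)) (π : Equiv.Perm (Fin n)) :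
    inversions n (Equiv.swap a b * π) = inversions n π + 1 ∨
    inversions n π = inversions n (Equiv.swap a b * π) + 1 := by
  have hab' : a ≠ b := by intro h'; rw [h'] at hab; omega
  have hne : π⁻¹ a ≠ π⁻¹ b := fun h => hab' (by
    have := congrArg π h; simpa using this)
  rcases hne.lt_or_gt with h | h
  · exact Or.inl (inv_swap_of_lt a b hab π h)
  · right
    have h2 : (Equiv.swap a b * π)⁻¹ a < (Equiv.swap a b * π)⁻¹ b := by
      simp only [mul_inv_rev, Equiv.Perm.mul_apply]
      rw [Equiv.swap_inv, Equiv.swap_apply_left, Equiv.swap_apply_right]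
      exact h
    have := inv_swap_of_lt a b hab (Equiv.swap a b * π) h2
    rwa [← mul_assoc, Equiv.swap_mul_self, one_mul] at this

noncomputable def Fsum (n : ℕ) (q : ℝ) (i₀ a : Fin n) : ℝ :=
  ∑ π ∈ Finset.univ.filter (fun π : Equiv.Perm (Fin n) => π i₀ = a), q ^ inversions n π

lemma Fsum_pos {n : ℕ} {q : ℝ} (hq : 0 < q) (i₀ a : Fin n) : 0 < Fsum n q i₀ a := by
  refine Finset.sum_pos (fun π _ => pow_pos hq _) ⟨Equiv.swap i₀ a, ?_⟩
  simp [Equiv.swap_apply_left]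

lemma Fsum_reindex {n : ℕ} (q : ℝ) (i₀ a b : Fin n) :
    Fsum n q i₀ b = ∑ σ ∈ Finset.univ.filter
      (fun σ : Equiv.Perm (Fin n) => σ i₀ = a), q ^ inversions n (Equiv.swap a b * σ) := by
  refine (Finset.sum_equiv (Equiv.mulLeft (Equiv.swap a b)) (fun σ => ?_) (fun σ _ => rfl)).symm
  simp only [mem_filter, mem_univ, true_and, Equiv.coe_mulLeft, Equiv.Perm.mul_apply]
  constructor
  · intro h; rw [h, Equiv.swap_apply_left]
  · intro h
    have := congrArg (Equiv.swap a b) h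
    rwa [Equiv.swap_apply_self, Equiv.swap_apply_right] at this

lemma term_bound {q : ℝ} (hq : 0 < q) {j k : ℕ} (h : j = k + 1 ∨ k = j + 1) :
    q ^ j ≤ max q q⁻¹ * q ^ k := by
  rcases h with rfl | rfl
  · rw [pow_succ, mul_comm]
    exact mul_le_mul_of_nonneg_right (le_max_left _ _) (pow_pos hq k).le
  · have hqe : q ^ j = q⁻¹ * q ^ (j + 1) := by
      rw [pow_succ, ← mul_assoc, mul_comm q⁻¹ (q ^ j), mul_assoc,
        inv_mul_cancel₀ hq.ne', mul_one]
    rw [hqe]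
    exact mul_le_mul_of_nonneg_right (le_max_right _ _) (pow_pos hq _).le

lemma Fsum_adj {n : ℕ} {q : ℝ} (hq : 0 < q) (i₀ a b : Fin n) (hab : (a:ℕ)+1 = (b:ℕ)) :
    Fsum n q i₀ b ≤ max q q⁻¹ * Fsum n q i₀ a ∧
    Fsum n q i₀ a ≤ max q q⁻¹ * Fsum n q i₀ b := by
  constructor
  · rw [Fsum_reindex q i₀ a b, Fsum, Finset.mul_sum]
    refine Finset.sum_le_sum (fun σ _ => ?_)
    exact term_bound hq ((inv_swap a b hab σ).imp id id)
  · rw [Fsum_reindex q i₀ a b, Fsum, Finset.mul_sum]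
    refine Finset.sum_le_sum (fun σ _ => ?_)
    exact term_bound hq ((inv_swap a b hab σ).symm.imp id id)

lemma Fsum_chain {n : ℕ} {q : ℝ} (hq : 0 < q) (i₀ : Fin n) :
    ∀ k : ℕ, ∀ a b : Fin n, (b:ℕ) = (a:ℕ) + k →
      Fsum n q i₀ a ≤ (max q q⁻¹) ^ k * Fsum n q i₀ b ∧
      Fsum n q i₀ b ≤ (max q q⁻¹) ^ k * Fsum n q i₀ a := by
  have hM : (0:ℝ) < max q q⁻¹ := lt_of_lt_of_le hq (le_max_left _ _)
  intro k
  induction k with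
  | zero =>
    intro a b h
    have : a = b := Fin.ext (by omega)
    subst this
    simp
  | succ k ih =>
    intro a b h
    have hb' : (a:ℕ) + k < n := by have := b.isLt; omega
    set b' : Fin n := ⟨(a:ℕ) + k, hb'⟩ with hb'def
    obtain ⟨h1, h2⟩ := ih a b' rfl
    obtain ⟨h3, h4⟩ := Fsum_adj hq i₀ b' b (by simp [hb'def]; omega)
    have hMk : (0:ℝ) ≤ (max q q⁻¹) ^ k := (pow_pos hM k).le
    constructor
    · calc Fsum n q i₀ a ≤ (max q q⁻¹) ^ k * Fsum n q i₀ b' := h1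
        _ ≤ (max q q⁻¹) ^ k * (max q q⁻¹ * Fsum n q i₀ b) :=
            mul_le_mul_of_nonneg_left h4 hMk
        _ = (max q q⁻¹) ^ (k+1) * Fsum n q i₀ b := by ring
    · calc Fsum n q i₀ b ≤ max q q⁻¹ * Fsum n q i₀ b' := h3
        _ ≤ max q q⁻¹ * ((max q q⁻¹) ^ k * Fsum n q i₀ a) :=
            mul_le_mul_of_nonneg_left h2 hM.le
        _ = (max q q⁻¹) ^ (k+1) * Fsum n q i₀ a := by ring

lemma ratio_aux {q : ℝ} (hq : 0 < q) {A B : ℝ} (hA : 0 < A) (hB : 0 < B) (k : ℕ)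
    (h1 : A ≤ (max q q⁻¹) ^ k * B) (h2 : B ≤ (max q q⁻¹) ^ k * A) :
    min (q ^ k) (q⁻¹ ^ k) ≤ A / B ∧ A / B ≤ max (q ^ k) (q⁻¹ ^ k) := by
  have hq' : (0:ℝ) < q⁻¹ := inv_pos.mpr hq
  have hMk : (max q q⁻¹) ^ k = max (q ^ k) (q⁻¹ ^ k) := by
    rcases le_total q q⁻¹ with h | h
    · rw [max_eq_right h, max_eq_right (pow_le_pow_left₀ hq.le h k)]
    · rw [max_eq_left h, max_eq_left (pow_le_pow_left₀ hq'.le h k)]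
  have hmk : (min q q⁻¹) ^ k = min (q ^ k) (q⁻¹ ^ k) := by
    rcases le_total q q⁻¹ with h | h
    · rw [min_eq_left h, min_eq_left (pow_le_pow_left₀ hq.le h k)]
    · rw [min_eq_right h, min_eq_right (pow_le_pow_left₀ hq'.le h k)]
  have hprod : (min q q⁻¹) ^ k * (max q q⁻¹) ^ k = 1 := by
    rw [← mul_pow, min_mul_max, mul_inv_cancel₀ hq.ne', one_pow]
  constructor
  · rw [← hmk, le_div_iff₀ hB]
    calc (min q q⁻¹) ^ k * B ≤ (min q q⁻¹) ^ k * ((max q q⁻¹) ^ k * A) := by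
          refine mul_le_mul_of_nonneg_left h2 ?_
          positivity
      _ = (min q q⁻¹) ^ k * (max q q⁻¹) ^ k * A := by ring
      _ = A := by rw [hprod, one_mul]
  · rw [← hMk, div_le_iff₀ hB]
    rwa [mul_comm] at h1 ⊢

/-- **Lemma 3.3.** For any `1 ≤ i, s, t ≤ n` and `q > 0`, with `d = |s − t|`,
`min(q^d, q^{−d}) ≤ μ_{n,q}(π(i)=s) / μ_{n,q}(π(i)=t) ≤ max(q^d, q^{−d})`. -/
theorem mallows_value_ratio_bound (n : ℕ) (q : ℝ) (hq : 0 < q)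
    (i s t : ℕ) (hi : 1 ≤ i ∧ i ≤ n) (hs : 1 ≤ s ∧ s ≤ n) (ht : 1 ≤ t ∧ t ≤ n) :
    min (q ^ (max s t - min s t)) (q⁻¹ ^ (max s t - min s t))
        ≤ mallowsProb n q (fun π => permAct n π i = s)
            / mallowsProb n q (fun π => permAct n π i = t) ∧
      mallowsProb n q (fun π => permAct n π i = s)
          / mallowsProb n q (fun π => permAct n π i = t)
        ≤ max (q ^ (max s t - min s t)) (q⁻¹ ^ (max s t - min s t)) := by
  classical
  have hn : 0 < n := by omega
  set i₀ : Fin n := ⟨i - 1, by omega⟩ with hi₀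
  have hZ : 0 < ∑ σ : Equiv.Perm (Fin n), q ^ inversions n σ :=
    Finset.sum_pos (fun σ _ => pow_pos hq _) Finset.univ_nonempty
  -- rewrite mallowsProb as Fsum / Z
  have probEq : ∀ u : ℕ, ∀ hu : 1 ≤ u ∧ u ≤ n,
      mallowsProb n q (fun π => permAct n π i = u)
        = Fsum n q i₀ ⟨u - 1, by omega⟩ / ∑ σ : Equiv.Perm (Fin n), q ^ inversions n σ := by
    intro u hu
    rw [mallowsProb, Fsum, Finset.sum_div, Finset.sum_filter]
    refine Finset.sum_congr rfl fun π _ => ?_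
    have hiff : permAct n π i = u ↔ π i₀ = (⟨u - 1, by omega⟩ : Fin n) := by
      rw [permAct, dif_pos hi]
      show ((π i₀ : Fin n) : ℕ) + 1 = u ↔ _
      rw [Fin.ext_iff]
      show _ ↔ ((π i₀ : Fin n) : ℕ) = u - 1
      have := (π i₀).isLt
      omega
    by_cases h : π i₀ = (⟨u - 1, by omega⟩ : Fin n)
    · rw [if_pos h, if_pos (hiff.mpr h), mallowsPMF]
    · rw [if_neg h, if_neg (fun hh => h (hiff.mp hh))]
  rw [probEq s hs, probEq t ht, div_div_div_comm, div_self hZ.ne', div_one]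
  set s₀ : Fin n := ⟨s - 1, by omega⟩
  set t₀ : Fin n := ⟨t - 1, by omega⟩
  rcases le_total s t with hst | hst
  · have hd : (t₀ : ℕ) = (s₀ : ℕ) + (max s t - min s t) := by
      simp only [s₀, t₀]; omega
    obtain ⟨h1, h2⟩ := Fsum_chain hq i₀ (max s t - min s t) s₀ t₀ hd
    exact ratio_aux hq (Fsum_pos hq i₀ s₀) (Fsum_pos hq i₀ t₀) _ h1 h2
  · have hd : (s₀ : ℕ) = (t₀ : ℕ) + (max s t - min s t) := by
      simp only [s₀, t₀]; omega
    obtain ⟨h1, h2⟩ := Fsum_chain hq i₀ (max s t - min s t) t₀ s₀ hd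
    exact ratio_aux hq (Fsum_pos hq i₀ s₀) (Fsum_pos hq i₀ t₀) _ h2 h1
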